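/- Let $X$ be a metric space, $n \geq 2$, and $S_1,\dots,S_n,D \in X$. Suppose that for each $2 \leq j \leq n$, $d(S_{j-1},S_j) + d(S_j,D) - d(S_{j-1},D) \leq d(S_j,D)$. Then for every $1 \leq i \leq n$, $\sum_{j=i}^{n-1} d(S_j,S_{j+1}) + d(S_n,D) \leq 2^{n-i+1}\, d(S_i,D)$; in particular this quantity is at most $2^n \, d(S_i,D)$ for every $i$. -/

import Mathlib

theorem stmt8 {X : Type*} [MetricSpace X] (n : ℕ) (hn : 2 ≤ n)
    (S : ℕ → X) (D : X)
    (h : ∀ j, 2 ≤ j → j ≤ n →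
      dist (S (j-1)) (S j) + dist (S j) D - dist (S (j-1)) D ≤ dist (S j) D) :
    ∀ i, 1 ≤ i → i ≤ n →
      (∑ j ∈ Finset.Ico i n, dist (S j) (S (j+1))) + dist (S n) D
        ≤ 2 ^ (n - i + 1) * dist (S i) D ∧
      (∑ j ∈ Finset.Ico i n, dist (S j) (S (j+1))) + dist (S n) D
        ≤ 2 ^ n * dist (S i) D := by
  intro i hi1 hin
  have hd0 : 0 ≤ dist (S i) D := dist_nonneg
  have hstep : ∀ j, 1 ≤ j → j + 1 ≤ n → dist (S j) (S (j+1)) ≤ dist (S j) D := by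
    intro j hj hjn
    have := h (j+1) (by omega) hjn
    simp only [Nat.add_sub_cancel] at this
    linarith
  have hkey : ∀ j, i ≤ j → j ≤ n → dist (S j) D ≤ 2^(j-i) * dist (S i) D := by
    intro j hj
    induction j, hj using Nat.le_induction with
    | base => intro _; simp
    | succ j hj ih =>
      intro hjn
      have h1 := ih (by omega)
      have h2 := hstep j (by omega) hjn
      have h3 : dist (S (j+1)) D ≤ dist (S j) (S (j+1)) + dist (S j) D := by
        rw [dist_comm (S j) (S (j+1))]; exact dist_triangle _ _ _
      have hpow : j + 1 - i = (j - i) + 1 := by omega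
      have hp0 : (0:ℝ) ≤ 2^(j-i) := by positivity
      rw [hpow, pow_succ]
      nlinarith
  have hb : (∑ j ∈ Finset.Ico i n, dist (S j) (S (j+1)))
      ≤ ∑ j ∈ Finset.Ico i n, (2:ℝ)^(j-i) * dist (S i) D := by
    apply Finset.sum_le_sum
    intro j hj
    rw [Finset.mem_Ico] at hj
    calc dist (S j) (S (j+1)) ≤ dist (S j) D := hstep j (by omega) (by omega)
      _ ≤ 2^(j-i) * dist (S i) D := hkey j hj.1 (by omega)
  have hgeo : ∑ j ∈ Finset.Ico i n, (2:ℝ)^(j-i) * dist (S i) D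
      = ((2:ℝ)^(n-i) - 1) * dist (S i) D := by
    rw [← Finset.sum_mul]
    congr 1
    rw [Finset.sum_Ico_eq_sum_range]
    have : ∀ j ∈ Finset.range (n - i), (2:ℝ)^(i + j - i) = 2^j := by
      intro j _; congr 1; omega
    rw [Finset.sum_congr rfl this]
    have := geom_sum_eq (by norm_num : (2:ℝ) ≠ 1) (n - i)
    rw [this]; ring
  have hn' := hkey n hin le_rfl
  have hmain : (∑ j ∈ Finset.Ico i n, dist (S j) (S (j+1))) + dist (S n) D
      ≤ 2 ^ (n - i + 1) * dist (S i) D := by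
    have hp : (2:ℝ)^(n-i+1) = 2^(n-i) * 2 := pow_succ 2 (n-i)
    nlinarith [hb, hgeo, hn']
  refine ⟨hmain, hmain.trans ?_⟩
  have : (2:ℝ)^(n-i+1) ≤ 2^n := by
    apply pow_le_pow_right₀ (by norm_num)
    omega
  nlinarith
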